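/- (Double robustness of the uncentered influence function for Γ0, correct outcome regression.) Let m_0, m_1 be versions of E[Y | X, Z=0] and E[Y | X, Z=1]. Then for EVERY measurable function π* : S × {0,1} → ℝ with π*(x,z) ≥ ε′ for some ε′ > 0, E[ (2Z−1)/π*(X,Z) · (Y − m_Z(X)) + m_1(X) − m_0(X) ] = Γ0 := E[m1(X) − m0(X)]. In particular the instrument propensity π* may be arbitrarily misspecified. -/

import Mathlib

open MeasureTheory ProbabilityTheory

/-- A measurable function a.e.-bounded in absolute value is integrable w.r.t. a
finite measure. -/
lemma integrable_of_ae_abs_le {Ω : Type*} [MeasurableSpace Ω] {P : Measure Ω}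
    [IsFiniteMeasure P] {f : Ω → ℝ} (hf : Measurable f) {C : ℝ}
    (h : ∀ᵐ ω ∂P, |f ω| ≤ C) : Integrable f P :=
  Integrable.mono' (integrable_const C) hf.aestronglyMeasurable
    (by simpa [Real.norm_eq_abs] using h)

/-- If m is a version of E[Y | X, Z = z] and |Y| ≤ C, then |m(X)| ≤ C a.e. on {Z = z}. -/
lemma ae_bound_of_version {Ω : Type*} [MeasurableSpace Ω] (P : Measure Ω)
    [IsProbabilityMeasure P] {S : Type*} [mS : MeasurableSpace S]
    (X : Ω → S) (hX : Measurable X) (Z Y : Ω → ℝ) (hZ : Measurable Z)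
    (hY : Measurable Y) (z : ℝ) {C : ℝ} (hC : 0 ≤ C) (hYb : ∀ ω, |Y ω| ≤ C)
    (m : S → ℝ) (hm : Measurable m)
    (hmv : ∀ g : S → ℝ, Measurable g → (∃ C, ∀ x, |g x| ≤ C) →
      ∫ ω, Y ω * (if Z ω = z then (1:ℝ) else 0) * g (X ω) ∂P
        = ∫ ω, m (X ω) * (if Z ω = z then (1:ℝ) else 0) * g (X ω) ∂P) :
    ∀ᵐ ω ∂P, Z ω = z → |m (X ω)| ≤ C := by
  -- the bad sets, truncated
  set A : ℕ → Set S := fun n =>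
    {x | C + 1/(n+1) ≤ |m x| ∧ |m x| ≤ C + (n+1)} with hA
  have hAmeas : ∀ n, MeasurableSet (A n) := by
    intro n
    exact (measurableSet_le measurable_const hm.abs).inter
      (measurableSet_le hm.abs measurable_const)
  set B : ℕ → Set Ω := fun n => {ω | Z ω = z ∧ X ω ∈ A n} with hB
  have hBmeas : ∀ n, MeasurableSet (B n) := by
    intro n
    exact (hZ (measurableSet_singleton z)).inter (hX (hAmeas n))
  have hBnull : ∀ n, P (B n) = 0 := by
    intro n
    -- test function
    set g : S → ℝ := fun x =>
      if x ∈ A n then (if 0 ≤ m x then (1:ℝ) else -1) else 0 with hg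
    have hgmeas : Measurable g := by
      exact Measurable.ite (hAmeas n)
        (Measurable.ite (measurableSet_le measurable_const hm)
          measurable_const measurable_const) measurable_const
    have hgb : ∀ x, |g x| ≤ 1 := by
      intro x
      simp only [hg]
      split_ifs <;> simp
    have key := hmv g hgmeas ⟨1, hgb⟩
    -- rewrite both sides as indicator integrals
    have hL : (fun ω => Y ω * (if Z ω = z then (1:ℝ) else 0) * g (X ω))
        = (B n).indicator (fun ω => Y ω * (if 0 ≤ m (X ω) then (1:ℝ) else -1)) := by
      funext ω
      by_cases h1 : Z ω = z <;> by_cases h2 : X ω ∈ A n <;>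
        simp [Set.indicator, hB, hg, h1, h2]
    have hR : (fun ω => m (X ω) * (if Z ω = z then (1:ℝ) else 0) * g (X ω))
        = (B n).indicator (fun ω => |m (X ω)|) := by
      funext ω
      by_cases h1 : Z ω = z
      · by_cases h2 : X ω ∈ A n
        · have hmem : ω ∈ B n := ⟨h1, h2⟩
          rw [Set.indicator_of_mem hmem]
          simp only [hg, if_pos h2, if_pos h1, mul_one]
          by_cases h3 : 0 ≤ m (X ω)
          · rw [if_pos h3, mul_one, abs_of_nonneg h3]
          · rw [if_neg h3, abs_of_neg (not_le.mp h3)]; ring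
        · have hmem : ω ∉ B n := fun hb => h2 hb.2
          rw [Set.indicator_of_notMem hmem]
          simp [hg, h2]
      · have hmem : ω ∉ B n := fun hb => h1 hb.1
        rw [Set.indicator_of_notMem hmem]
        simp [h1]
    rw [hL, hR, integral_indicator (hBmeas n), integral_indicator (hBmeas n)] at key
    -- integrability on B n
    have hIntY : IntegrableOn (fun ω => Y ω * (if 0 ≤ m (X ω) then (1:ℝ) else -1)) (B n) P := by
      refine Integrable.integrableOn ?_
      refine integrable_of_ae_abs_le (C := C)
        (hY.mul (Measurable.ite (measurableSet_le measurable_const (hm.comp hX))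
          measurable_const measurable_const)) ?_
      filter_upwards with ω
      rw [abs_mul]
      calc |Y ω| * |if 0 ≤ m (X ω) then (1:ℝ) else -1| ≤ C * 1 := by
            apply mul_le_mul (hYb ω) _ (abs_nonneg _) hC
            split_ifs <;> simp
        _ = C := mul_one C
    have hIntM : IntegrableOn (fun ω => |m (X ω)|) (B n) P := by
      rw [← integrable_indicator_iff (hBmeas n)]
      refine integrable_of_ae_abs_le (C := C + (n+1))
        (((hm.comp hX).abs).indicator (hBmeas n)) ?_
      filter_upwards with ω
      by_cases h2 : ω ∈ B n
      · simp only [Set.indicator_of_mem h2, abs_abs]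
        exact h2.2.2
      · simp only [Set.indicator_of_notMem h2, abs_zero]
        positivity
    -- bounds
    have hYabs : ∀ ω, Y ω * (if 0 ≤ m (X ω) then (1:ℝ) else -1) ≤ C := by
      intro ω
      calc Y ω * (if 0 ≤ m (X ω) then (1:ℝ) else -1)
          ≤ |Y ω * (if 0 ≤ m (X ω) then (1:ℝ) else -1)| := le_abs_self _
        _ ≤ C := by
            rw [abs_mul]
            calc |Y ω| * |if 0 ≤ m (X ω) then (1:ℝ) else -1| ≤ C * 1 := by
                  apply mul_le_mul (hYb ω) _ (abs_nonneg _) hC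
                  split_ifs <;> simp
              _ = C := mul_one C
    have hLb : ∫ ω in B n, Y ω * (if 0 ≤ m (X ω) then (1:ℝ) else -1) ∂P
        ≤ (P (B n)).toReal * C := by
      have hmono := setIntegral_mono_on (g := fun _ => C) hIntY
        (integrableOn_const (measure_lt_top P _).ne)
        (hBmeas n) (fun ω _ => hYabs ω)
      rwa [setIntegral_const, smul_eq_mul] at hmono
    have hRb : (P (B n)).toReal * (C + 1/(n+1)) ≤ ∫ ω in B n, |m (X ω)| ∂P := by
      have hmono := setIntegral_mono_on (f := fun _ => C + 1/(n+1))
        (integrableOn_const (measure_lt_top P _).ne)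
        hIntM (hBmeas n) (fun ω hω => hω.2.1)
      rwa [setIntegral_const, smul_eq_mul] at hmono
    have ht : (0:ℝ) ≤ (P (B n)).toReal := ENNReal.toReal_nonneg
    have hpos : (0:ℝ) < 1/((n:ℝ)+1) := by positivity
    have : (P (B n)).toReal * (C + 1/(n+1)) ≤ (P (B n)).toReal * C := by
      calc (P (B n)).toReal * (C + 1/(n+1)) ≤ ∫ ω in B n, |m (X ω)| ∂P := hRb
        _ = ∫ ω in B n, Y ω * (if 0 ≤ m (X ω) then (1:ℝ) else -1) ∂P := key.symm
        _ ≤ (P (B n)).toReal * C := hLb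
    have hzero : (P (B n)).toReal = 0 := by nlinarith
    exact (ENNReal.toReal_eq_zero_iff _).mp hzero |>.resolve_right
      (fun h => (measure_lt_top P _).ne h)
  -- bad set is contained in the union of the B n
  have hsub : {ω | ¬ (Z ω = z → |m (X ω)| ≤ C)} ⊆ ⋃ n, B n := by
    intro ω hω
    simp only [Set.mem_setOf_eq] at hω
    push_neg at hω
    obtain ⟨hωz, hωm⟩ := hω
    obtain ⟨n₁, hn₁⟩ := exists_nat_one_div_lt (sub_pos.mpr hωm)
    obtain ⟨n₂, hn₂⟩ := exists_nat_ge (|m (X ω)| - C)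
    refine Set.mem_iUnion.mpr ⟨max n₁ n₂, hωz, ?_, ?_⟩
    · have h1 : 1/((max n₁ n₂ : ℕ) + 1 : ℝ) ≤ 1/((n₁:ℝ)+1) := by
        apply one_div_le_one_div_of_le (by positivity)
        have : (n₁ : ℝ) ≤ (max n₁ n₂ : ℕ) := by exact_mod_cast le_max_left n₁ n₂
        linarith
      linarith [hn₁.le]
    · have : (n₂ : ℝ) ≤ (max n₁ n₂ : ℕ) := by exact_mod_cast le_max_right n₁ n₂
      linarith
  rw [ae_iff]
  exact measure_mono_null hsub (measure_iUnion_null hBnull)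

theorem stmt_8
    {Ω : Type*} [MeasurableSpace Ω] (P : Measure Ω) [IsProbabilityMeasure P]
    {S : Type*} [mS : MeasurableSpace S]
    (X : Ω → S) (hX : Measurable X)
    (Z Y : Ω → ℝ) (hZ : Measurable Z) (hY : Measurable Y)
    (hZ01 : ∀ ω, Z ω = 0 ∨ Z ω = 1)
    (hYb : ∃ C, ∀ ω, |Y ω| ≤ C)
    (m0 m1 : S → ℝ) (hm0 : Measurable m0) (hm1 : Measurable m1)
    (hm0v : ∀ g : S → ℝ, Measurable g → (∃ C, ∀ x, |g x| ≤ C) →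
      ∫ ω, Y ω * (if Z ω = 0 then (1:ℝ) else 0) * g (X ω) ∂P
        = ∫ ω, m0 (X ω) * (if Z ω = 0 then (1:ℝ) else 0) * g (X ω) ∂P)
    (hm1v : ∀ g : S → ℝ, Measurable g → (∃ C, ∀ x, |g x| ≤ C) →
      ∫ ω, Y ω * (if Z ω = 1 then (1:ℝ) else 0) * g (X ω) ∂P
        = ∫ ω, m1 (X ω) * (if Z ω = 1 then (1:ℝ) else 0) * g (X ω) ∂P) :
    ∀ (π0s π1s : S → ℝ) (ε' : ℝ), Measurable π0s → Measurable π1s → 0 < ε' →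
      (∀ x, ε' ≤ π0s x) → (∀ x, ε' ≤ π1s x) →
      ∫ ω, (2 * Z ω - 1) / (if Z ω = 1 then π1s (X ω) else π0s (X ω))
            * (Y ω - (if Z ω = 1 then m1 (X ω) else m0 (X ω)))
          + (m1 (X ω) - m0 (X ω)) ∂P
        = ∫ ω, m1 (X ω) - m0 (X ω) ∂P := by
  intro π0s π1s ε' hπ0 hπ1 hε hb0 hb1
  obtain ⟨C₀, hC₀⟩ := hYb
  set C := max C₀ 0 with hCdef
  have hC : 0 ≤ C := le_max_right _ _
  have hYb' : ∀ ω, |Y ω| ≤ C := fun ω => (hC₀ ω).trans (le_max_left _ _)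
  have hmb0 := ae_bound_of_version P X hX Z Y hZ hY 0 hC hYb' m0 hm0 hm0v
  have hmb1 := ae_bound_of_version P X hX Z Y hZ hY 1 hC hYb' m1 hm1 hm1v
  -- the pieces
  set e1 : Ω → ℝ := fun ω => if Z ω = 1 then (1:ℝ) else 0 with he1
  set e0 : Ω → ℝ := fun ω => if Z ω = 0 then (1:ℝ) else 0 with he0
  have he1m : Measurable e1 :=
    Measurable.ite (hZ (measurableSet_singleton 1)) measurable_const measurable_const
  have he0m : Measurable e0 :=
    Measurable.ite (hZ (measurableSet_singleton 0)) measurable_const measurable_const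
  have hg1m : Measurable (fun x => (π1s x)⁻¹) := hπ1.inv
  have hg0m : Measurable (fun x => (π0s x)⁻¹) := hπ0.inv
  have hg1b : ∀ x, |(π1s x)⁻¹| ≤ ε'⁻¹ := by
    intro x
    rw [abs_of_nonneg (inv_nonneg.mpr (hε.le.trans (hb1 x)))]
    exact inv_anti₀ hε (hb1 x)
  have hg0b : ∀ x, |(π0s x)⁻¹| ≤ ε'⁻¹ := by
    intro x
    rw [abs_of_nonneg (inv_nonneg.mpr (hε.le.trans (hb0 x)))]
    exact inv_anti₀ hε (hb0 x)
  have he1b : ∀ ω, |e1 ω| ≤ 1 := by intro ω; simp only [he1]; split_ifs <;> simp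
  have he0b : ∀ ω, |e0 ω| ≤ 1 := by intro ω; simp only [he0]; split_ifs <;> simp
  -- integrands
  set f1 : Ω → ℝ := fun ω => Y ω * e1 ω * (π1s (X ω))⁻¹ with hf1
  set f1' : Ω → ℝ := fun ω => m1 (X ω) * e1 ω * (π1s (X ω))⁻¹ with hf1'
  set f0 : Ω → ℝ := fun ω => Y ω * e0 ω * (π0s (X ω))⁻¹ with hf0
  set f0' : Ω → ℝ := fun ω => m0 (X ω) * e0 ω * (π0s (X ω))⁻¹ with hf0'
  have hint1 : Integrable f1 P := by
    refine integrable_of_ae_abs_le (C := C * ε'⁻¹) ((hY.mul he1m).mul (hg1m.comp hX)) ?_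
    filter_upwards with ω
    rw [abs_mul, abs_mul]
    have := mul_le_mul (hYb' ω) (he1b ω) (abs_nonneg _) hC
    exact mul_le_mul (by simpa using this) (hg1b _) (abs_nonneg _) (by positivity)
  have hint0 : Integrable f0 P := by
    refine integrable_of_ae_abs_le (C := C * ε'⁻¹) ((hY.mul he0m).mul (hg0m.comp hX)) ?_
    filter_upwards with ω
    rw [abs_mul, abs_mul]
    have := mul_le_mul (hYb' ω) (he0b ω) (abs_nonneg _) hC
    exact mul_le_mul (by simpa using this) (hg0b _) (abs_nonneg _) (by positivity)
  have hint1' : Integrable f1' P := by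
    refine integrable_of_ae_abs_le (C := C * ε'⁻¹)
      (((hm1.comp hX).mul he1m).mul (hg1m.comp hX)) ?_
    filter_upwards [hmb1] with ω hω
    rw [abs_mul, abs_mul]
    have hb : |m1 (X ω)| * |e1 ω| ≤ C := by
      by_cases h : Z ω = 1
      · have : |e1 ω| = 1 := by simp [he1, h]
        rw [this, mul_one]; exact hω h
      · have : |e1 ω| = 0 := by simp [he1, h]
        rw [this, mul_zero]; exact hC
    exact mul_le_mul hb (hg1b _) (abs_nonneg _) hC
  have hint0' : Integrable f0' P := by
    refine integrable_of_ae_abs_le (C := C * ε'⁻¹)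
      (((hm0.comp hX).mul he0m).mul (hg0m.comp hX)) ?_
    filter_upwards [hmb0] with ω hω
    rw [abs_mul, abs_mul]
    have hb : |m0 (X ω)| * |e0 ω| ≤ C := by
      by_cases h : Z ω = 0
      · have : |e0 ω| = 1 := by simp [he0, h]
        rw [this, mul_one]; exact hω h
      · have : |e0 ω| = 0 := by simp [he0, h]
        rw [this, mul_zero]; exact hC
    exact mul_le_mul hb (hg0b _) (abs_nonneg _) hC
  -- the version property gives equal integrals
  have heq1 : ∫ ω, f1 ω ∂P = ∫ ω, f1' ω ∂P := by
    simpa [hf1, hf1', he1] using hm1v (fun x => (π1s x)⁻¹) hg1m ⟨ε'⁻¹, hg1b⟩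
  have heq0 : ∫ ω, f0 ω ∂P = ∫ ω, f0' ω ∂P := by
    simpa [hf0, hf0', he0] using hm0v (fun x => (π0s x)⁻¹) hg0m ⟨ε'⁻¹, hg0b⟩
  -- the correction term
  set G : Ω → ℝ := fun ω => (f1 ω - f1' ω) - (f0 ω - f0' ω) with hG
  have hGint : Integrable G P := ((hint1.sub hint1').sub (hint0.sub hint0'))
  have hint11 : Integrable (fun ω => f1 ω - f1' ω) P := hint1.sub hint1'
  have hint00 : Integrable (fun ω => f0 ω - f0' ω) P := hint0.sub hint0'
  have hGzero : ∫ ω, G ω ∂P = 0 := by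
    show ∫ ω, ((f1 ω - f1' ω) - (f0 ω - f0' ω)) ∂P = 0
    rw [integral_sub hint11 hint00,
      integral_sub hint1 hint1', integral_sub hint0 hint0', heq1, heq0]
    ring
  set h : Ω → ℝ := fun ω => m1 (X ω) - m0 (X ω) with hh
  -- pointwise identity
  have hpt : ∀ ω, (2 * Z ω - 1) / (if Z ω = 1 then π1s (X ω) else π0s (X ω))
      * (Y ω - (if Z ω = 1 then m1 (X ω) else m0 (X ω)))
      + (m1 (X ω) - m0 (X ω)) = G ω + h ω := by
    intro ω
    rcases hZ01 ω with hz | hz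
    · have hne : Z ω ≠ 1 := by rw [hz]; norm_num
      simp only [hG, hh, hf1, hf1', hf0, hf0', he1, he0, hz, hne, if_neg hne, if_pos rfl]
      simp only [if_neg (by norm_num : (0:ℝ) ≠ 1), if_true]
      field_simp
      ring
    · have hne : Z ω ≠ 0 := by rw [hz]; norm_num
      simp only [hG, hh, hf1, hf1', hf0, hf0', he1, he0, hz, if_pos rfl, if_neg hne]
      simp only [if_pos rfl, if_neg (by norm_num : (1:ℝ) ≠ 0), if_true]
      field_simp
      ring
  calc ∫ ω, (2 * Z ω - 1) / (if Z ω = 1 then π1s (X ω) else π0s (X ω))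
          * (Y ω - (if Z ω = 1 then m1 (X ω) else m0 (X ω)))
        + (m1 (X ω) - m0 (X ω)) ∂P
      = ∫ ω, G ω + h ω ∂P := by
        exact integral_congr_ae (Filter.Eventually.of_forall hpt)
    _ = ∫ ω, h ω ∂P := by
        by_cases hhint : Integrable h P
        · rw [integral_add hGint hhint, hGzero, zero_add]
        · have hni : ¬ Integrable (fun ω => G ω + h ω) P := by
            intro hcon
            have h4 : ((fun ω => G ω + h ω) - G) =ᵐ[P] h :=
              Filter.Eventually.of_forall (fun ω => by
                show (G ω + h ω) - G ω = h ω; ring)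
            exact hhint (Integrable.congr (hcon.sub hGint) h4)
          rw [integral_undef hni, integral_undef hhint]
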